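/- Every Polish space is quasi-Polish, i.e., homeomorphic to a Π⁰₂ subspace of 𝕊^ℕ. -/

import Mathlib

open TopologicalSpace Set Topology Filter Metric

/-- A Π⁰₂ set: a countable intersection of sets of the form (complement of open) ∪ open. -/
def IsPi02 {X : Type*} [TopologicalSpace X] (s : Set X) : Prop :=
  ∃ U V : ℕ → Set X, (∀ n, IsOpen (U n)) ∧ (∀ n, IsOpen (V n)) ∧
    s = ⋂ n, ((U n)ᶜ ∪ V n)

/-- A quasi-Polish space: homeomorphic to a Π⁰₂ subspace of 𝕊^ℕ,
where 𝕊 is the Sierpiński space (`Prop` with its topology in Mathlib). -/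
def QuasiPolish (X : Type*) [TopologicalSpace X] : Prop :=
  ∃ s : Set (ℕ → Prop), IsPi02 s ∧ Nonempty (X ≃ₜ s)

namespace PolishQuasiAux

lemma isOpen_eval {ι : Type*} (q : ι) : IsOpen {α : ι → Prop | α q} := by
  have h2 : IsOpen {p : Prop | p} := by
    convert isOpen_singleton_true using 1
    ext p
    constructor
    · intro hp; exact eq_true hp
    · intro hp; exact of_eq_true hp
  show IsOpen ((fun α : ι → Prop => α q) ⁻¹' {p | p})
  exact h2.preimage (continuous_apply q)

lemma isOpen_const {ι : Type*} (P : Prop) : IsOpen {α : ι → Prop | P} := by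
  by_cases h : P <;> simp [h]

lemma isOpen_and_eval {ι : Type*} (P : Prop) (q : ι) :
    IsOpen {α : ι → Prop | P ∧ α q} := by
  by_cases h : P
  · simpa [h] using isOpen_eval q
  · simp [h]

lemma IsPi02.of_homeomorph_image {Xt Yt : Type*} [TopologicalSpace Xt] [TopologicalSpace Yt]
    (h : Xt ≃ₜ Yt) {s : Set Xt} (hs : IsPi02 s) : IsPi02 (h '' s) := by
  obtain ⟨U, V, hU, hV, rfl⟩ := hs
  refine ⟨fun n => h.symm ⁻¹' U n, fun n => h.symm ⁻¹' V n,
    fun n => (hU n).preimage h.symm.continuous, fun n => (hV n).preimage h.symm.continuous, ?_⟩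
  rw [← Homeomorph.preimage_symm]
  simp [preimage_iInter, preimage_union, preimage_compl]

lemma isPi02_iInter {ι : Type*} [Countable ι] {Y : Type*} [TopologicalSpace Y]
    (U V : ι → Set Y) (hU : ∀ i, IsOpen (U i)) (hV : ∀ i, IsOpen (V i)) :
    IsPi02 (⋂ i, ((U i)ᶜ ∪ V i)) := by
  cases isEmpty_or_nonempty ι with
  | inl h =>
    refine ⟨fun _ => ∅, fun _ => ∅, fun _ => isOpen_empty, fun _ => isOpen_empty, ?_⟩
    simp
  | inr h =>
    obtain ⟨f, hf⟩ := exists_surjective_nat ι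
    exact ⟨U ∘ f, V ∘ f, fun n => hU _, fun n => hV _,
      (hf.iInter_comp fun i => (U i)ᶜ ∪ V i).symm⟩

noncomputable def rad (m : ℕ) : ℝ := 1 / (m + 1)

lemma rad_pos (m : ℕ) : 0 < rad m := by unfold rad; positivity

lemma exists_rad_lt {ε : ℝ} (hε : 0 < ε) : ∃ m, rad m < ε := exists_nat_one_div_lt hε

lemma tendsto_rad : Tendsto rad atTop (𝓝 0) := tendsto_one_div_add_atTop_nhds_zero_nat

section Key

variable {X : Type*} [MetricSpace X] [CompleteSpace X] (u : ℕ → X)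

/-- The embedding of `X` into the Sierpiński cube indexed by `ℕ × ℕ`. -/
def emb (x : X) : ℕ × ℕ → Prop := fun p => dist x (u p.1) < rad p.2

/-- The Π⁰₂ condition set characterizing the range of `emb`. -/
def cond : Set (ℕ × ℕ → Prop) :=
  {α | (∀ k, ∃ i, α (i, k)) ∧
    (∀ i m j n, α (i, m) → α (j, n) → dist (u i) (u j) < rad m + rad n) ∧
    (∀ i m, α (i, m) → ∃ j n, dist (u i) (u j) + rad n < rad m ∧ α (j, n)) ∧
    (∀ i m j n, dist (u i) (u j) + rad n < rad m → α (j, n) → α (i, m))}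

lemma emb_mem_cond (hu : DenseRange u) (x : X) : emb u x ∈ cond u := by
  refine ⟨?_, ?_, ?_, ?_⟩
  · intro k
    obtain ⟨i, hi⟩ := hu.exists_dist_lt x (rad_pos k)
    exact ⟨i, hi⟩
  · intro i m j n h1 h2
    calc dist (u i) (u j) ≤ dist (u i) x + dist x (u j) := dist_triangle _ _ _
      _ < rad m + rad n := by
        rw [dist_comm (u i) x]; exact add_lt_add h1 h2
  · intro i m him
    have hpos : 0 < (rad m - dist x (u i)) / 2 := by
      simp only [emb] at him; linarith
    obtain ⟨n, hn⟩ := exists_rad_lt hpos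
    obtain ⟨j, hj⟩ := hu.exists_dist_lt x (rad_pos n)
    refine ⟨j, n, ?_, hj⟩
    have h1 : dist (u i) (u j) ≤ dist (u i) x + dist x (u j) := dist_triangle _ _ _
    simp only [emb] at him
    rw [dist_comm (u i) x] at h1
    linarith
  · intro i m j n hd hjn
    simp only [emb] at hjn ⊢
    calc dist x (u i) ≤ dist x (u j) + dist (u j) (u i) := dist_triangle _ _ _
      _ < rad n + dist (u i) (u j) := by rw [dist_comm (u j) (u i)]; exact add_lt_add_left hjn _
      _ < rad m := by linarith

lemma cond_subset_range : cond u ⊆ range (emb u) := by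
  rintro α ⟨h1, h2, h3, h4⟩
  -- choose centers
  choose c hc using h1
  -- the sequence (u (c k)) is Cauchy
  have hcauchy : CauchySeq fun k => u (c k) := by
    rw [Metric.cauchySeq_iff']
    intro ε hε
    obtain ⟨N, hN⟩ := exists_rad_lt (half_pos hε)
    refine ⟨N, fun n hn => ?_⟩
    have := h2 (c n) n (c N) N (hc n) (hc N)
    have hrn : rad n ≤ rad N := by
      unfold rad
      apply one_div_le_one_div_of_le (by positivity)
      exact_mod_cast Nat.succ_le_succ hn
    calc dist (u (c n)) (u (c N)) < rad n + rad N := this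
      _ ≤ rad N + rad N := by linarith
      _ < ε := by linarith
  obtain ⟨x, hx⟩ := cauchySeq_tendsto_of_complete hcauchy
  -- Lemma A : α (i, m) → dist x (u i) ≤ rad m
  have lemA : ∀ i m, α (i, m) → dist x (u i) ≤ rad m := by
    intro i m him
    have hdist : Tendsto (fun k => dist (u (c k)) (u i)) atTop (𝓝 (dist x (u i))) :=
      (Continuous.dist continuous_id continuous_const).continuousAt.tendsto.comp hx
    have hle : Tendsto (fun k => rad k + rad m) atTop (𝓝 (0 + rad m)) :=
      tendsto_rad.add tendsto_const_nhds
    rw [zero_add] at hle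
    refine le_of_tendsto_of_tendsto hdist hle (Eventually.of_forall fun k => ?_)
    exact le_of_lt (h2 (c k) k i m (hc k) him)
  -- strict version using roundness
  have lemB : ∀ i m, α (i, m) → dist x (u i) < rad m := by
    intro i m him
    obtain ⟨j, n, hd, hjn⟩ := h3 i m him
    have := lemA j n hjn
    calc dist x (u i) ≤ dist x (u j) + dist (u j) (u i) := dist_triangle _ _ _
      _ ≤ rad n + dist (u i) (u j) := by rw [dist_comm (u j) (u i)]; linarith
      _ < rad m := by linarith
  refine ⟨x, ?_⟩
  funext p
  obtain ⟨i, m⟩ := p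
  simp only [emb]
  apply propext
  constructor
  · -- dist x (u i) < rad m → α (i, m)
    intro hxm
    have hpos : 0 < (rad m - dist x (u i)) / 2 := by linarith
    obtain ⟨k, hk⟩ := exists_rad_lt hpos
    refine h4 i m (c k) k ?_ (hc k)
    have h5 : dist x (u (c k)) ≤ rad k := lemA (c k) k (hc k)
    have h6 : dist (u i) (u (c k)) ≤ dist (u i) x + dist x (u (c k)) := dist_triangle _ _ _
    rw [dist_comm (u i) x] at h6
    linarith
  · exact lemB i m

lemma range_emb_eq (hu : DenseRange u) : range (emb u) = cond u :=
  le_antisymm (range_subset_iff.2 (emb_mem_cond u hu)) (cond_subset_range u)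

lemma isPi02_cond : IsPi02 (cond u) := by
  classical
  let ι := ((ℕ × ℕ × ℕ × ℕ) ⊕ (ℕ × ℕ × ℕ × ℕ)) ⊕ ((ℕ × ℕ) ⊕ ℕ)
  let U : ι → Set (ℕ × ℕ → Prop) := fun i =>
    match i with
    | .inl (.inl (i, m, j, n)) => {α | α (i, m) ∧ α (j, n)}
    | .inl (.inr (i, m, j, n)) => {α | dist (u i) (u j) + rad n < rad m ∧ α (j, n)}
    | .inr (.inl (i, m)) => {α | α (i, m)}
    | .inr (.inr _) => univ
  let V : ι → Set (ℕ × ℕ → Prop) := fun i =>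
    match i with
    | .inl (.inl (i, m, j, n)) => {α | dist (u i) (u j) < rad m + rad n}
    | .inl (.inr (i, m, j, n)) => {α | α (i, m)}
    | .inr (.inl (i, m)) => {α | ∃ j n, dist (u i) (u j) + rad n < rad m ∧ α (j, n)}
    | .inr (.inr k) => {α | ∃ i, α (i, k)}
  have hU : ∀ i, IsOpen (U i) := by
    rintro (⟨⟨i, m, j, n⟩ | ⟨i, m, j, n⟩⟩ | ⟨⟨i, m⟩ | k⟩)
    · exact (isOpen_eval (i, m)).inter (isOpen_eval (j, n))
    · exact isOpen_and_eval _ (j, n)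
    · exact isOpen_eval (i, m)
    · exact isOpen_univ
  have hV : ∀ i, IsOpen (V i) := by
    rintro (⟨⟨i, m, j, n⟩ | ⟨i, m, j, n⟩⟩ | ⟨⟨i, m⟩ | k⟩)
    · exact isOpen_const _
    · exact isOpen_eval (i, m)
    · show IsOpen {α : ℕ × ℕ → Prop | ∃ j n, dist (u i) (u j) + rad n < rad m ∧ α (j, n)}
      have : {α : ℕ × ℕ → Prop | ∃ j n, dist (u i) (u j) + rad n < rad m ∧ α (j, n)} =
          ⋃ j, ⋃ n, {α : ℕ × ℕ → Prop | dist (u i) (u j) + rad n < rad m ∧ α (j, n)} := by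
        ext α; simp [mem_iUnion]
      rw [this]
      exact isOpen_iUnion fun j => isOpen_iUnion fun n => isOpen_and_eval _ (j, n)
    · show IsOpen {α : ℕ × ℕ → Prop | ∃ i, α (i, k)}
      have : {α : ℕ × ℕ → Prop | ∃ i, α (i, k)} =
          ⋃ i, {α : ℕ × ℕ → Prop | α (i, k)} := by
        ext α; simp [mem_iUnion]
      rw [this]
      exact isOpen_iUnion fun i => isOpen_eval (i, k)
  have heq : cond u = ⋂ i, ((U i)ᶜ ∪ V i) := by
    ext α
    simp only [cond, mem_setOf_eq, mem_iInter]
    constructor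
    · rintro ⟨h1, h2, h3, h4⟩ (⟨⟨i, m, j, n⟩ | ⟨i, m, j, n⟩⟩ | ⟨⟨i, m⟩ | k⟩) <;>
        simp only [U, V, mem_union, mem_compl_iff, mem_setOf_eq, compl_univ,
          mem_empty_iff_false, false_or, empty_union, univ_union, mem_univ, compl_empty]
      · rw [← imp_iff_not_or]
        rintro ⟨ha, hb⟩
        exact h2 i m j n ha hb
      · rw [← imp_iff_not_or]
        rintro ⟨hd, ha⟩
        exact h4 i m j n hd ha
      · rw [← imp_iff_not_or]
        exact h3 i m
      · exact h1 k
    · intro h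
      refine ⟨?_, ?_, ?_, ?_⟩
      · intro k
        have := h (.inr (.inr k))
        simpa [U, V] using this
      · intro i m j n ha hb
        have := h (.inl (.inl (i, m, j, n)))
        simp only [U, V, mem_union, mem_compl_iff, mem_setOf_eq, not_and] at this
        rcases this with hna | hd
        · exact absurd hb (hna ha)
        · exact hd
      · intro i m ha
        have := h (.inr (.inl (i, m)))
        simp only [U, V, mem_union, mem_compl_iff, mem_setOf_eq] at this
        rcases this with hna | hd
        · exact absurd ha hna
        · exact hd
      · intro i m j n hd ha
        have := h (.inl (.inr (i, m, j, n)))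
        simp only [U, V, mem_union, mem_compl_iff, mem_setOf_eq, not_and] at this
        rcases this with hna | him
        · exact absurd ha (hna hd)
        · exact him
  rw [heq]
  exact isPi02_iInter U V hU hV

lemma isEmbedding_emb (hu : DenseRange u) : IsEmbedding (emb u) := by
  have hcont : Continuous (emb u) := by
    apply continuous_pi
    intro p
    rw [continuous_Prop]
    exact isOpen_ball
  constructor
  · rw [isInducing_iff_nhds]
    intro x
    refine le_antisymm (hcont.tendsto x).le_comap ?_
    rw [(Metric.nhds_basis_ball (x := x)).ge_iff]
    intro ε hε
    obtain ⟨m, hm⟩ := exists_rad_lt (half_pos hε)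
    obtain ⟨i, hi⟩ := hu.exists_dist_lt x (rad_pos m)
    rw [mem_comap]
    refine ⟨{α | α (i, m)}, (isOpen_eval (i, m)).mem_nhds hi, ?_⟩
    intro y hy
    simp only [mem_preimage, mem_setOf_eq, emb] at hy
    rw [mem_ball]
    calc dist y x ≤ dist y (u i) + dist (u i) x := dist_triangle _ _ _
      _ < rad m + rad m := by rw [dist_comm (u i) x]; exact add_lt_add hy hi
      _ < ε := by linarith
  · intro x y hxy
    by_contra hne
    have hd : 0 < dist x y := dist_pos.2 hne
    obtain ⟨m, hm⟩ := exists_rad_lt (half_pos hd)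
    obtain ⟨i, hi⟩ := hu.exists_dist_lt x (rad_pos m)
    have hx' : emb u x (i, m) := hi
    have hy' : emb u y (i, m) := by rw [← hxy]; exact hx'
    have : dist x y ≤ dist x (u i) + dist (u i) y := dist_triangle _ _ _
    rw [dist_comm (u i) y] at this
    simp only [emb] at hx' hy'
    linarith

lemma key (hu : DenseRange u) : ∃ s : Set (ℕ × ℕ → Prop), IsPi02 s ∧ Nonempty (X ≃ₜ s) := by
  refine ⟨cond u, isPi02_cond u, ⟨?_⟩⟩
  have h := (isEmbedding_emb u hu).toHomeomorph
  rw [range_emb_eq u hu] at h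
  exact h

end Key

end PolishQuasiAux

open PolishQuasiAux in
theorem polish_quasiPolish {X : Type*} [TopologicalSpace X] [PolishSpace X] :
    QuasiPolish X := by
  letI := upgradeIsCompletelyMetrizable X
  cases isEmpty_or_nonempty X with
  | inl h =>
    refine ⟨∅, ⟨fun _ => univ, fun _ => ∅, fun _ => isOpen_univ, fun _ => isOpen_empty, by simp [iInter_const]⟩,
      ⟨{ toEquiv := Equiv.equivOfIsEmpty X (∅ : Set (ℕ → Prop))
         continuous_toFun := by
           rw [continuous_def]; intro s _
           rw [(Set.eq_empty_of_isEmpty _ : _ ⁻¹' s = ∅)]; exact isOpen_empty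
         continuous_invFun := by
           rw [continuous_def]; intro s _
           rw [(Set.eq_empty_of_isEmpty _ : _ ⁻¹' s = ∅)]; exact isOpen_empty }⟩⟩
  | inr h =>
    obtain ⟨u, hu⟩ := TopologicalSpace.exists_dense_seq X
    obtain ⟨s, hs, ⟨e⟩⟩ := key u hu
    let π : (ℕ → Prop) ≃ₜ (ℕ × ℕ → Prop) :=
      Homeomorph.piCongrLeft (Y := fun _ : ℕ × ℕ => Prop) (Denumerable.eqv (ℕ × ℕ)).symm
    refine ⟨π.symm '' s, IsPi02.of_homeomorph_image π.symm hs, ⟨e.trans (π.symm.image s)⟩⟩
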